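/- Computing an extraction order of minimum extraction width for a given directed graph is NP-hard. Specifically, the vertex cover problem on connected undirected graphs reduces in polynomial time to the problem of finding an extraction order of minimum width. -/

import Mathlib

/-- The list of consecutive edges traversed by a path given as a list of vertices. -/
def pathEdges {V : Type*} (p : List V) : List (V × V) := p.zip p.tail

/-- A (simple) directed path from `a` to `b` in the edge set `E`, given as the
nonempty list of visited vertices. -/
def IsPath {V : Type*} (E : Finset (V × V)) (a b : V) (p : List V) : Prop :=
  p ≠ [] ∧ p.head? = some a ∧ p.getLast? = some b ∧ p.Nodup ∧
    ∀ e ∈ pathEdges p, e ∈ E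

/-- An extraction order: a rooted DAG in which every vertex is reachable from the root. -/
structure ExtractionOrder (V : Type*) where
  E : Finset (V × V)
  root : V
  reach : ∀ v : V, ∃ p : List V, IsPath E root v p
  acyclic : ∀ u v : V, (u, v) ∈ E → ¬ ∃ p : List V, IsPath E v u p

/-- A confluence from `i` to `j`: two distinct directed paths from `i` to `j`
that are vertex-disjoint except at their shared endpoints. -/
def IsConfluence {V : Type*} (E : Finset (V × V)) (i j : V) (p₁ p₂ : List V) : Prop :=
  i ≠ j ∧ p₁ ≠ p₂ ∧ IsPath E i j p₁ ∧ IsPath E i j p₂ ∧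
    ∀ v, v ∈ p₁ → v ∈ p₂ → v = i ∨ v = j

/-- The edge `e` is labeled with `j` iff some confluence with target `j` contains `e`. -/
def IsLabeled {V : Type*} (E : Finset (V × V)) (e : V × V) (j : V) : Prop :=
  ∃ i p₁ p₂, IsConfluence E i j p₁ p₂ ∧ (e ∈ pathEdges p₁ ∨ e ∈ pathEdges p₂)

/-- The edge `e` lies on some directed path from `i` to `j`. -/
def OnPath {V : Type*} (E : Finset (V × V)) (i j : V) (e : V × V) : Prop :=
  ∃ p, IsPath E i j p ∧ e ∈ pathEdges p

/-- The label set of an edge. -/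
def labelSet {V : Type*} (E : Finset (V × V)) (e : V × V) : Set V :=
  {j | IsLabeled E e j}

/-- Two edges lie in the same edge bag (of the common tail `e.1`) iff they are linked by a
chain of outgoing edges of `e.1` with pairwise intersecting label sets. -/
def inSameBag {V : Type*} (E : Finset (V × V)) (e e' : V × V) : Prop :=
  Relation.ReflTransGen
    (fun a b => a ∈ E ∧ b ∈ E ∧ a.1 = e.1 ∧ b.1 = e.1 ∧
      (labelSet E a ∩ labelSet E b).Nonempty) e e'

/-- The union of the label sets of the edges in the bag of `e`. -/
def bagLabels {V : Type*} (E : Finset (V × V)) (e : V × V) : Set V :=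
  {j | ∃ e', inSameBag E e e' ∧ IsLabeled E e' j}

/-- The width of an extraction order: one plus the maximal number of labels in any edge bag. -/
noncomputable def widthX {V : Type*} (X : ExtractionOrder V) : ℕ :=
  1 + X.E.sup (fun e => (bagLabels X.E e).ncard)

/-- `EX` is obtained from `E` by possibly reversing the orientation of some edges. -/
def IsOrientationOf {V : Type*} (EX E : Finset (V × V)) : Prop :=
  (∀ u v : V, (u, v) ∈ EX → (u, v) ∈ E ∨ (v, u) ∈ E) ∧
  (∀ u v : V, (u, v) ∈ E → (u, v) ∈ EX ∨ (v, u) ∈ EX)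

/-- The extraction width of a directed graph: the minimum width over all its extraction orders. -/
noncomputable def extractionWidth {V : Type*} (E : Finset (V × V)) : ℕ :=
  sInf {w | ∃ X : ExtractionOrder V, IsOrientationOf X.E E ∧ widthX X = w}

/-- The underlying undirected simple graph of a directed edge set. -/
def underlying {V : Type*} (E : Finset (V × V)) : SimpleGraph V where
  Adj u v := u ≠ v ∧ ((u, v) ∈ E ∨ (v, u) ∈ E)
  symm := by constructor; intro u v h; exact ⟨h.1.symm, h.2.elim Or.inr Or.inl⟩
  loopless := by constructor; intro u h; exact h.1 rfl

/-- A vertex cover of an undirected graph. -/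
def IsVertexCover {V : Type*} (G : SimpleGraph V) (S : Finset V) : Prop :=
  ∀ u v : V, G.Adj u v → u ∈ S ∨ v ∈ S

/-- The size of a minimum vertex cover. -/
noncomputable def minVertexCover {V : Type*} (G : SimpleGraph V) : ℕ :=
  sInf {k | ∃ S : Finset V, IsVertexCover G S ∧ S.card = k}

/-- The graph of the vertex-cover reduction: the vertices of `G` together with a half
wheel on `2·|V| + 2` outer vertices whose center `none` also plays the role of the
super root `r̂`; the center is joined to every original vertex and to every outer wheel
vertex, consecutive outer wheel vertices are joined, and each edge of `G` is oriented
by the linear order. -/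
def reductionGraph {V : Type*} [Fintype V] [LinearOrder V]
    (G : SimpleGraph V) [DecidableRel G.Adj] :
    Finset (Option (V ⊕ Fin (2 * Fintype.card V + 2)) ×
            Option (V ⊕ Fin (2 * Fintype.card V + 2))) :=
  (((Finset.univ : Finset (V × V)).filter
      (fun p => p.1 < p.2 ∧ G.Adj p.1 p.2)).image
        (fun p => (some (Sum.inl p.1), some (Sum.inl p.2)))) ∪
  (Finset.univ.image fun i : V =>
      ((none : Option (V ⊕ Fin (2 * Fintype.card V + 2))), some (Sum.inl i))) ∪
  (Finset.univ.image fun k : Fin (2 * Fintype.card V + 2) =>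
      ((none : Option (V ⊕ Fin (2 * Fintype.card V + 2))), some (Sum.inr k))) ∪
  (((Finset.univ : Finset (Fin (2 * Fintype.card V + 2) × Fin (2 * Fintype.card V + 2))).filter
      (fun p => (p.2 : ℕ) = (p.1 : ℕ) + 1)).image
        (fun p => (some (Sum.inr p.1), some (Sum.inr p.2))))

section PathAPI

variable {V : Type*}

theorem pathEdges_length (p : List V) : (pathEdges p).length = p.length - 1 := by
  simp [pathEdges]

theorem pathEdges_getElem (p : List V) (i : ℕ) (h : i < (pathEdges p).length) :
    (pathEdges p)[i] = (p[i]'(by simp [pathEdges] at h; omega),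
      p[i+1]'(by simp [pathEdges] at h; omega)) := by
  simp [pathEdges, List.getElem_zip, List.getElem_tail]

theorem mem_pathEdges_iff {p : List V} {e : V × V} :
    e ∈ pathEdges p ↔ ∃ i : ℕ, ∃ h : i + 1 < p.length,
      p[i]'(by omega) = e.1 ∧ p[i+1]'h = e.2 := by
  constructor
  · intro he
    obtain ⟨i, hi, hg⟩ := List.mem_iff_getElem.mp he
    rw [pathEdges_getElem] at hg
    refine ⟨i, by simp [pathEdges] at hi; omega, ?_, ?_⟩ <;>
      simp [← hg]
  · rintro ⟨i, h, h1, h2⟩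
    refine List.mem_iff_getElem.mpr ⟨i, by simp [pathEdges]; omega, ?_⟩
    rw [pathEdges_getElem]
    · exact Prod.ext h1 h2

end PathAPI
section PathAPI2

variable {V : Type*} {E : Finset (V × V)} {a b : V} {p : List V}

theorem IsPath.length_pos (hp : IsPath E a b p) : 0 < p.length :=
  List.length_pos_iff.mpr hp.1

theorem IsPath.getElem_zero (hp : IsPath E a b p) : p[0]'hp.length_pos = a := by
  have h := hp.2.1
  rcases p with _ | ⟨x, q⟩
  · exact absurd rfl hp.1
  · simpa using h

theorem IsPath.getElem_last (hp : IsPath E a b p) :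
    p[p.length - 1]'(by have := hp.length_pos; omega) = b := by
  have h := hp.2.2.1
  rw [List.getLast?_eq_getLast hp.1, Option.some_inj, List.getLast_eq_getElem] at h
  exact h

theorem IsPath.edge (hp : IsPath E a b p) {i : ℕ} (h : i + 1 < p.length) :
    (p[i]'(by omega), p[i+1]'h) ∈ E :=
  hp.2.2.2.2 _ (mem_pathEdges_iff.mpr ⟨i, h, rfl, rfl⟩)

theorem IsPath.rank_le {f : V → ℕ} (hf : ∀ x y, (x, y) ∈ E → f x < f y)
    (hp : IsPath E a b p) : f a ≤ f b := by
  have key : ∀ i (h : i < p.length), f a ≤ f (p[i]'h) := by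
    intro i
    induction i with
    | zero => intro h; rw [hp.getElem_zero]
    | succ n ih =>
      intro h
      exact le_trans (ih (by omega)) (le_of_lt (hf _ _ (hp.edge h)))
  have := key (p.length - 1) (by have := hp.length_pos; omega)
  rwa [hp.getElem_last] at this

theorem acyclic_of_rank {f : V → ℕ} (hf : ∀ x y, (x, y) ∈ E → f x < f y) :
    ∀ u v : V, (u, v) ∈ E → ¬ ∃ p : List V, IsPath E v u p := by
  rintro u v huv ⟨p, hp⟩
  exact absurd (hp.rank_le hf) (by have := hf _ _ huv; omega)

theorem IsPath.drop (hp : IsPath E a b p) {i : ℕ} (hi : i < p.length) :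
    IsPath E (p[i]'hi) b (p.drop i) := by
  have hlen : (p.drop i).length = p.length - i := by simp
  have hne : p.drop i ≠ [] := by
    intro h; rw [← List.length_eq_zero_iff] at h; omega
  refine ⟨hne, ?_, ?_, hp.2.2.2.1.sublist (List.drop_sublist i p), ?_⟩
  · rw [List.head?_eq_head hne, Option.some_inj, List.head_eq_getElem]
    simp
  · rw [List.getLast?_eq_getLast hne, Option.some_inj, List.getLast_eq_getElem]
    simp only [hlen]
    rw [List.getElem_drop]
    simpa [show i + (p.length - i - 1) = p.length - 1 from by omega] using hp.getElem_last
  · intro e he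
    obtain ⟨k, hk, h1, h2⟩ := mem_pathEdges_iff.mp he
    apply hp.2.2.2.2
    refine mem_pathEdges_iff.mpr ⟨i + k, by omega, ?_, ?_⟩
    · rw [← h1, List.getElem_drop]
    · rw [← h2, List.getElem_drop]
      simp [show i + k + 1 = i + (k+1) from by omega]

theorem IsPath.mem_of_edge (hp : IsPath E a b p) {e : V × V} (he : e ∈ pathEdges p) :
    e.1 ∈ p ∧ e.2 ∈ p := by
  obtain ⟨i, hi, h1, h2⟩ := mem_pathEdges_iff.mp he
  exact ⟨h1 ▸ List.getElem_mem _, h2 ▸ List.getElem_mem _⟩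

/-- crossing lemma -/
theorem exists_crossing (P : V → Prop) (hp : IsPath E a b p)
    (ha : ¬ P a) (hb : P b) :
    ∃ e ∈ pathEdges p, ¬ P e.1 ∧ P e.2 := by
  classical
  have hPlast : P (p[p.length - 1]'(by have := hp.length_pos; omega)) := by
    rw [hp.getElem_last]; exact hb
  -- least index with property P
  have hex : ∃ i, ∃ h : i < p.length, P (p[i]'h) :=
    ⟨p.length - 1, by have := hp.length_pos; omega, hPlast⟩
  classical
  obtain ⟨hilt, hiP⟩ := Nat.find_spec hex
  have hmin : ∀ j, j < Nat.find hex → ¬ ∃ h : j < p.length, P (p[j]'h) :=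
    fun j hj => Nat.find_min hex hj
  have hi0 : Nat.find hex ≠ 0 := by
    intro h
    simp only [h] at hiP
    rw [hp.getElem_zero] at hiP; exact ha hiP
  have hprev : ¬ P (p[Nat.find hex - 1]'(by omega)) := by
    intro hP
    exact hmin (Nat.find hex - 1) (by omega) ⟨by omega, hP⟩
  refine ⟨(p[Nat.find hex - 1]'(by omega), p[Nat.find hex]'hilt), ?_, hprev, hiP⟩
  refine mem_pathEdges_iff.mpr ⟨Nat.find hex - 1, by omega, rfl, ?_⟩
  congr 1; omega

end PathAPI2
section Builders

variable {V : Type*} {E : Finset (V × V)}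

theorem isPath_single (a : V) : IsPath E a a [a] := by
  refine ⟨by simp, by simp, by simp, by simp, ?_⟩
  intro e he; simp [pathEdges] at he

theorem isPath_pair {a b : V} (hab : a ≠ b) (h : (a, b) ∈ E) : IsPath E a b [a, b] := by
  refine ⟨by simp, by simp, by simp, by simp [hab], ?_⟩
  intro e he
  simp [pathEdges] at he
  subst he; exact h

theorem isPath_triple {a b c : V} (hab : a ≠ b) (hbc : b ≠ c) (hac : a ≠ c)
    (h1 : (a, b) ∈ E) (h2 : (b, c) ∈ E) : IsPath E a c [a, b, c] := by
  refine ⟨by simp, by simp, by simp, by simp [hab, hbc, hac], ?_⟩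
  intro e he
  simp [pathEdges] at he
  rcases he with he | he <;> (subst he; assumption)

theorem isConfluence_triangle {i u j : V} (hiu : i ≠ u) (huj : u ≠ j) (hij : i ≠ j)
    (h1 : (i, u) ∈ E) (h2 : (u, j) ∈ E) (h3 : (i, j) ∈ E) :
    IsConfluence E i j [i, u, j] [i, j] := by
  refine ⟨hij, by simp, isPath_triple hiu huj hij h1 h2, isPath_pair hij h3, ?_⟩
  intro v _ hv2
  simpa using hv2

theorem isLabeled_triangle {i u j : V} (hiu : i ≠ u) (huj : u ≠ j) (hij : i ≠ j)
    (h1 : (i, u) ∈ E) (h2 : (u, j) ∈ E) (h3 : (i, j) ∈ E) :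
    IsLabeled E (i, u) j ∧ IsLabeled E (u, j) j ∧ IsLabeled E (i, j) j := by
  have hc := isConfluence_triangle hiu huj hij h1 h2 h3
  refine ⟨⟨i, _, _, hc, Or.inl ?_⟩, ⟨i, _, _, hc, Or.inl ?_⟩, ⟨i, _, _, hc, Or.inr ?_⟩⟩ <;>
    simp [pathEdges]

/-- The target of a confluence has two in-edges with distinct tails. -/
theorem IsConfluence.two_inedges {i j : V} {p₁ p₂ : List V}
    (hc : IsConfluence E i j p₁ p₂) :
    ∃ x₁ x₂, x₁ ≠ x₂ ∧ (x₁, j) ∈ E ∧ (x₂, j) ∈ E := by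
  obtain ⟨hij, hne, hp₁, hp₂, hdisj⟩ := hc
  have len1 : 2 ≤ p₁.length := by
    rcases Nat.lt_or_ge p₁.length 2 with h | h
    · interval_cases hl : p₁.length
      · exact absurd (List.length_eq_zero_iff.mp hl) hp₁.1
      · exfalso
        have h0 := hp₁.getElem_zero
        have hl2 := hp₁.getElem_last
        simp only [hl] at hl2
        exact hij (h0.symm.trans hl2)
    · exact h
  have len2 : 2 ≤ p₂.length := by
    rcases Nat.lt_or_ge p₂.length 2 with h | h
    · interval_cases hl : p₂.length
      · exact absurd (List.length_eq_zero_iff.mp hl) hp₂.1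
      · exfalso
        have h0 := hp₂.getElem_zero
        have hl2 := hp₂.getElem_last
        simp only [hl] at hl2
        exact hij (h0.symm.trans hl2)
    · exact h
  set x₁ := p₁[p₁.length - 2]'(by omega) with hx₁
  set x₂ := p₂[p₂.length - 2]'(by omega) with hx₂
  have he₁ : (x₁, j) ∈ E := by
    have := hp₁.edge (i := p₁.length - 2) (by omega)
    simp only [show p₁.length - 2 + 1 = p₁.length - 1 from by omega] at this
    rwa [hp₁.getElem_last] at this
  have he₂ : (x₂, j) ∈ E := by
    have := hp₂.edge (i := p₂.length - 2) (by omega)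
    simp only [show p₂.length - 2 + 1 = p₂.length - 1 from by omega] at this
    rwa [hp₂.getElem_last] at this
  refine ⟨x₁, x₂, ?_, he₁, he₂⟩
  intro hx
  -- x₁ = x₂ =: x; x in both paths
  have hm₁ : x₁ ∈ p₁ := by rw [hx₁]; exact List.getElem_mem _
  have hm₂ : x₁ ∈ p₂ := by rw [hx]; exact List.getElem_mem _
  have hxj : x₁ ≠ j := by
    intro h
    rw [← hp₁.getElem_last] at h
    have := (List.Nodup.getElem_inj_iff hp₁.2.2.2.1 (i := p₁.length - 2)
      (hi := by omega) (j := p₁.length - 1) (hj := by omega)).mp h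
    omega
  rcases hdisj _ hm₁ hm₂ with h | h
  swap
  · exact hxj h
  -- x = i : then p₁ = [i, j] and p₂ = [i, j]
  have key : ∀ (q : List V) (_ : IsPath E i j q) (hlq : 2 ≤ q.length),
      q[q.length - 2]'(by omega) = i → q = [i, j] := by
    intro q hq hlq hqi
    have h0 : q[0]'(by omega) = i := hq.getElem_zero
    have : q.length - 2 = 0 := by
      by_contra hne0
      have := (List.Nodup.getElem_inj_iff hq.2.2.2.1 (i := q.length - 2)
        (hi := by omega) (j := 0) (hj := by omega)).mp (hqi.trans h0.symm)
      omega
    have hlq2 : q.length = 2 := by omega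
    have h1 : q[1]'(by omega) = j := by
      have := hq.getElem_last; simp only [hlq2] at this; exact this
    apply List.ext_getElem (by simp [hlq2])
    intro n h₁ h₂
    simp only [hlq2, List.length_cons, List.length_singleton] at h₁ h₂ ⊢
    interval_cases n
    · simpa using h0
    · simpa using h1
  have e1 : p₁ = [i, j] := key p₁ hp₁ len1 (by rw [← hx₁]; exact h)
  have e2 : p₂ = [i, j] := key p₂ hp₂ len2 (by rw [← hx₂, ← hx]; exact h)
  exact hne (e1.trans e2.symm)

end Builders
namespace Stmt7

variable {V : Type*} [Fintype V] [LinearOrder V]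

set_option linter.unusedSectionVars false

abbrev VT (V : Type*) [Fintype V] := Option (V ⊕ Fin (2 * Fintype.card V + 2))

def ι (v : V) : VT V := some (Sum.inl v)

def wh (k : Fin (2 * Fintype.card V + 2)) : VT V := some (Sum.inr k)

theorem ι_injective : Function.Injective (ι (V := V)) := by
  intro a b h; simpa [ι] using h

theorem wh_injective : Function.Injective (wh (V := V)) := by
  intro a b h; simpa [wh] using h

@[simp] theorem ι_ne_wh (v : V) (k : Fin _) : ι v ≠ wh k := by simp [ι, wh]
@[simp] theorem wh_ne_ι (v : V) (k : Fin _) : wh k ≠ ι v := by simp [ι, wh]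
@[simp] theorem ι_ne_none (v : V) : ι v ≠ (none : VT V) := by simp [ι]
@[simp] theorem none_ne_ι (v : V) : (none : VT V) ≠ ι v := by simp [ι]
@[simp] theorem wh_ne_none (k : Fin _) : wh (V := V) k ≠ none := by simp [wh]
@[simp] theorem none_ne_wh (k : Fin _) : (none : VT V) ≠ wh k := by simp [wh]
@[simp] theorem ι_inj_iff {u v : V} : ι u = ι v ↔ u = v := ι_injective.eq_iff
@[simp] theorem wh_inj_iff {j k : Fin _} : wh (V := V) j = wh k ↔ j = k := wh_injective.eq_iff

theorem vt_cases (x : VT V) : x = none ∨ (∃ v, x = ι v) ∨ (∃ k, x = wh k) := by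
  rcases x with _ | (v | k)
  · exact Or.inl rfl
  · exact Or.inr (Or.inl ⟨v, rfl⟩)
  · exact Or.inr (Or.inr ⟨k, rfl⟩)

theorem mem_reductionGraph {G : SimpleGraph V} [DecidableRel G.Adj] {x y : VT V} :
    (x, y) ∈ reductionGraph G ↔
      (∃ u v, u < v ∧ G.Adj u v ∧ x = ι u ∧ y = ι v) ∨
      (∃ v : V, x = none ∧ y = ι v) ∨
      (∃ k, x = none ∧ y = wh (V := V) k) ∨
      (∃ j k : Fin (2 * Fintype.card V + 2), (k : ℕ) = (j : ℕ) + 1 ∧ x = wh j ∧ y = wh k) := by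
  simp only [reductionGraph, Finset.mem_union, Finset.mem_image, Finset.mem_filter,
    Finset.mem_univ, true_and, Prod.ext_iff, ι, wh, Prod.exists]
  aesop

end Stmt7
namespace Stmt7

variable {V : Type*} [Fintype V] [LinearOrder V] {G : SimpleGraph V} [DecidableRel G.Adj]

set_option linter.unusedSectionVars false

theorem red_spoke (k : Fin (2 * Fintype.card V + 2)) :
    ((none : VT V), wh k) ∈ reductionGraph G := by
  rw [mem_reductionGraph]
  exact Or.inr (Or.inr (Or.inl ⟨k, rfl, rfl⟩))

theorem red_rv (v : V) : ((none : VT V), ι v) ∈ reductionGraph G := by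
  rw [mem_reductionGraph]
  exact Or.inr (Or.inl ⟨v, rfl, rfl⟩)

theorem red_wheel {j k : Fin (2 * Fintype.card V + 2)} (h : (k : ℕ) = (j : ℕ) + 1) :
    (wh (V := V) j, wh k) ∈ reductionGraph G := by
  rw [mem_reductionGraph]
  exact Or.inr (Or.inr (Or.inr ⟨j, k, h, rfl, rfl⟩))

theorem red_G {u v : V} (huv : u < v) (hadj : G.Adj u v) :
    (ι u, ι v) ∈ reductionGraph G := by
  rw [mem_reductionGraph]
  exact Or.inl ⟨u, v, huv, hadj, rfl, rfl⟩

section WithX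

variable {X : ExtractionOrder (VT V)} (hX : IsOrientationOf X.E (reductionGraph G))

include hX

theorem spoke_or (k : Fin (2 * Fintype.card V + 2)) :
    ((none : VT V), wh k) ∈ X.E ∨ (wh k, none) ∈ X.E := hX.2 _ _ (red_spoke k)

theorem rv_or (v : V) : ((none : VT V), ι v) ∈ X.E ∨ (ι v, none) ∈ X.E :=
  hX.2 _ _ (red_rv v)

theorem wheel_or {j k : Fin (2 * Fintype.card V + 2)} (h : (k : ℕ) = (j : ℕ) + 1) :
    (wh (V := V) j, wh k) ∈ X.E ∨ (wh k, wh j) ∈ X.E := hX.2 _ _ (red_wheel h)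

theorem G_or {u v : V} (hadj : G.Adj u v) :
    (ι u, ι v) ∈ X.E ∨ (ι v, ι u) ∈ X.E := by
  rcases lt_or_gt_of_ne hadj.ne with h | h
  · exact hX.2 _ _ (red_G h hadj)
  · exact (hX.2 _ _ (red_G h hadj.symm)).symm

/-- in-edges of `ι v` come from `none` or from a `G`-neighbour -/
theorem tail_of_edge_to_inl {x : VT V} {v : V} (h : (x, ι v) ∈ X.E) :
    x = none ∨ ∃ u, x = ι u ∧ G.Adj u v := by
  rcases hX.1 _ _ h with hr | hr <;> rw [mem_reductionGraph] at hr
  · rcases hr with ⟨u, v', _, hadj, hx, hy⟩ | ⟨v', hx, _⟩ | ⟨k, _, hy⟩ | ⟨j, k, _, hx, hy⟩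
    · rw [ι_inj_iff] at hy; subst hy
      exact Or.inr ⟨u, hx, hadj⟩
    · exact Or.inl hx
    · exact absurd hy (ι_ne_wh _ _)
    · exact absurd hy (ι_ne_wh _ _)
  · rcases hr with ⟨u, v', _, hadj, hx, hy⟩ | ⟨v', hx, _⟩ | ⟨k, hx, _⟩ | ⟨j, k, _, hx, hy⟩
    · rw [ι_inj_iff] at hx; subst hx
      exact Or.inr ⟨v', hy, hadj.symm⟩
    · exact absurd hx (ι_ne_none _)
    · exact absurd hx (ι_ne_none _)
    · exact absurd hx (ι_ne_wh _ _)

/-- in-edges of `wh k` come from `none` or an adjacent wheel vertex -/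
theorem tail_of_edge_to_inr {x : VT V} {k : Fin (2 * Fintype.card V + 2)}
    (h : (x, wh k) ∈ X.E) :
    x = none ∨ ∃ j : Fin (2 * Fintype.card V + 2),
      x = wh j ∧ ((k : ℕ) = (j : ℕ) + 1 ∨ (j : ℕ) = (k : ℕ) + 1) := by
  rcases hX.1 _ _ h with hr | hr <;> rw [mem_reductionGraph] at hr
  · rcases hr with ⟨u, v', _, _, hx, hy⟩ | ⟨v', hx, hy⟩ | ⟨k', hx, hy⟩ | ⟨j, k', hjk, hx, hy⟩
    · exact absurd hy.symm (ι_ne_wh _ _)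
    · exact absurd hy.symm (ι_ne_wh _ _)
    · exact Or.inl hx
    · rw [wh_inj_iff] at hy; subst hy
      exact Or.inr ⟨j, hx, Or.inl hjk⟩
  · rcases hr with ⟨u, v', _, _, hx, hy⟩ | ⟨v', hx, hy⟩ | ⟨k', hx, hy⟩ | ⟨j, k', hjk, hx, hy⟩
    · exact absurd hx.symm (ι_ne_wh _ _)
    · exact absurd hx (wh_ne_none _)
    · exact absurd hx (wh_ne_none _)
    · rw [wh_inj_iff] at hx; subst hx
      exact Or.inr ⟨k', hy, Or.inr hjk⟩

theorem exists_none_path_to_inl {a : VT V} {v : V} {p : List (VT V)}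
    (hp : IsPath X.E a (ι v) p) (ha : ∀ u : V, a ≠ ι u) :
    ∃ q, IsPath X.E (none : VT V) (ι v) q := by
  rcases eq_or_ne a none with rfl | hne
  · exact ⟨p, hp⟩
  · obtain ⟨e, he, he1, he2⟩ := exists_crossing (fun x => ∃ u : V, x = ι u) hp
      (fun ⟨u, hu⟩ => ha u hu) ⟨v, rfl⟩
    obtain ⟨u, hu⟩ := he2
    have heE : e ∈ X.E := hp.2.2.2.2 _ he
    have h1n : e.1 = none := by
      have : (e.1, ι u) ∈ X.E := by rw [← hu]; exact heE
      rcases tail_of_edge_to_inl hX this with h | ⟨u', hu', _⟩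
      · exact h
      · exact absurd ⟨u', hu'⟩ he1
    obtain ⟨i, hi, hg1, _⟩ := mem_pathEdges_iff.mp he
    have hd := hp.drop (i := i) (by omega)
    rw [hg1, h1n] at hd
    exact ⟨p.drop i, hd⟩

theorem exists_none_path_to_inr {a : VT V} {k : Fin (2 * Fintype.card V + 2)}
    {p : List (VT V)} (hp : IsPath X.E a (wh k) p) (ha : ∀ j, a ≠ wh j) :
    ∃ q, IsPath X.E (none : VT V) (wh k) q := by
  rcases eq_or_ne a none with rfl | hne
  · exact ⟨p, hp⟩
  · obtain ⟨e, he, he1, he2⟩ := exists_crossing (fun x => ∃ j, x = wh j) hp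
      (fun ⟨j, hj⟩ => ha j hj) ⟨k, rfl⟩
    obtain ⟨j, hj⟩ := he2
    have heE : e ∈ X.E := hp.2.2.2.2 _ he
    have h1n : e.1 = none := by
      have : (e.1, wh j) ∈ X.E := by rw [← hj]; exact heE
      rcases tail_of_edge_to_inr hX this with h | ⟨j', hj', _⟩
      · exact h
      · exact absurd ⟨j', hj'⟩ he1
    obtain ⟨i, hi, hg1, _⟩ := mem_pathEdges_iff.mp he
    have hd := hp.drop (i := i) (by omega)
    rw [hg1, h1n] at hd
    exact ⟨p.drop i, hd⟩

end WithX

end Stmt7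
namespace Stmt7

variable {V : Type*} [Fintype V] [LinearOrder V] {G : SimpleGraph V} [DecidableRel G.Adj]

set_option linter.unusedSectionVars false

variable {X : ExtractionOrder (VT V)}

open scoped Classical in
noncomputable def headFn (X : ExtractionOrder (VT V)) (j : Fin (2 * Fintype.card V + 1)) :
    Fin (2 * Fintype.card V + 2) :=
  if (wh (V := V) ⟨j, by have := j.isLt; omega⟩, wh ⟨(j : ℕ) + 1, by have := j.isLt; omega⟩) ∈ X.E
    then ⟨(j : ℕ) + 1, by have := j.isLt; omega⟩ else ⟨(j : ℕ), by have := j.isLt; omega⟩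

theorem headFn_mem (X : ExtractionOrder (VT V)) (j : Fin (2 * Fintype.card V + 1)) :
    (headFn X j : ℕ) = (j : ℕ) + 1 ∨ (headFn X j : ℕ) = (j : ℕ) := by
  rw [headFn]
  split
  · exact Or.inl rfl
  · exact Or.inr rfl

theorem headFn_card (X : ExtractionOrder (VT V)) :
    Fintype.card V + 1 ≤ (Finset.univ.image (headFn X)).card := by
  classical
  have h := Finset.card_le_mul_card_image (f := headFn X)
    (Finset.univ : Finset (Fin (2 * Fintype.card V + 1))) 2 ?_
  · simp only [Finset.card_univ, Fintype.card_fin] at h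
    omega
  · intro a _
    have hsub : (Finset.univ.filter (fun j => headFn X j = a)) ⊆
        (Finset.univ.filter
          (fun j : Fin (2 * Fintype.card V + 1) => (j : ℕ) = (a : ℕ) - 1 ∨ (j : ℕ) = (a : ℕ))) := by
      intro j hj
      simp only [Finset.mem_filter, Finset.mem_univ, true_and] at hj ⊢
      rcases headFn_mem X j with h' | h' <;> rw [hj] at h' <;> omega
    refine le_trans (Finset.card_le_card hsub) ?_
    refine le_trans (Finset.card_le_card_of_injOn (fun j => (j : ℕ))
      (t := ({(a : ℕ) - 1, (a : ℕ)} : Finset ℕ)) ?_ ?_) ?_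
    · intro j hj
      simp only [Finset.coe_filter, Finset.mem_coe, Finset.mem_filter, Finset.mem_univ, true_and, Set.mem_setOf_eq] at hj
      simp only [Finset.coe_insert, Finset.coe_singleton, Finset.mem_coe, Set.mem_insert_iff, Set.mem_singleton_iff, Finset.mem_insert, Finset.mem_singleton]
      exact hj
    · intro x _ y _ h
      exact Fin.ext h
    · exact le_trans (Finset.card_insert_le _ _) (by simp)

variable (hX : IsOrientationOf X.E (reductionGraph G))

include hX

theorem headFn_spec (hall : ∀ k, ((none : VT V), wh k) ∈ X.E)
    (j : Fin (2 * Fintype.card V + 1)) :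
    IsLabeled X.E ((none : VT V), wh ⟨(j : ℕ), by have := j.isLt; omega⟩) (wh (headFn X j)) ∧
    IsLabeled X.E ((none : VT V), wh ⟨(j : ℕ) + 1, by have := j.isLt; omega⟩) (wh (headFn X j)) ∧
    IsLabeled X.E ((none : VT V), wh (headFn X j)) (wh (headFn X j)) := by
  classical
  have hne : wh (V := V) ⟨(j : ℕ), by have := j.isLt; omega⟩ ≠
      wh ⟨(j : ℕ) + 1, by have := j.isLt; omega⟩ := by
    simp only [wh_inj_iff, Fin.mk.injEq, ne_eq]
    omega
  by_cases hc : (wh (V := V) ⟨(j : ℕ), by have := j.isLt; omega⟩,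
      wh ⟨(j : ℕ) + 1, by have := j.isLt; omega⟩) ∈ X.E
  · have hh : headFn X j = ⟨(j : ℕ) + 1, by have := j.isLt; omega⟩ := by
      rw [headFn, if_pos hc]
    have ht := isLabeled_triangle (E := X.E)
      (i := (none : VT V)) (u := wh ⟨(j : ℕ), by have := j.isLt; omega⟩)
      (j := wh ⟨(j : ℕ) + 1, by have := j.isLt; omega⟩)
      (none_ne_wh _) hne (none_ne_wh _) (hall _) hc (hall _)
    rw [hh]
    exact ⟨ht.1, ht.2.2, ht.2.2⟩
  · have hrev : (wh (V := V) ⟨(j : ℕ) + 1, by have := j.isLt; omega⟩,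
        wh ⟨(j : ℕ), by have := j.isLt; omega⟩) ∈ X.E := by
      rcases wheel_or hX (j := ⟨(j : ℕ), by have := j.isLt; omega⟩)
        (k := ⟨(j : ℕ) + 1, by have := j.isLt; omega⟩) rfl with h | h
      · exact absurd h hc
      · exact h
    have hh : headFn X j = ⟨(j : ℕ), by have := j.isLt; omega⟩ := by
      rw [headFn, if_neg hc]
    have ht := isLabeled_triangle (E := X.E)
      (i := (none : VT V)) (u := wh ⟨(j : ℕ) + 1, by have := j.isLt; omega⟩)
      (j := wh ⟨(j : ℕ), by have := j.isLt; omega⟩)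
      (none_ne_wh _) hne.symm (none_ne_wh _) (hall _) hrev (hall _)
    rw [hh]
    exact ⟨ht.2.2, ht.1, ht.2.2⟩

theorem wheel_same_bag (hall : ∀ k, ((none : VT V), wh k) ∈ X.E) :
    ∀ (kn : ℕ) (hk : kn < 2 * Fintype.card V + 2),
      inSameBag X.E ((none : VT V), wh (0 : Fin (2 * Fintype.card V + 2)))
        ((none : VT V), wh ⟨kn, hk⟩) := by
  intro kn
  induction kn with
  | zero =>
    intro hk
    have h0 : (⟨0, hk⟩ : Fin (2 * Fintype.card V + 2)) = 0 := rfl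
    rw [h0]
    exact Relation.ReflTransGen.refl
  | succ n ih =>
    intro hk
    have hn : n < 2 * Fintype.card V + 2 := by omega
    have hn1 : n < 2 * Fintype.card V + 1 := by omega
    refine Relation.ReflTransGen.tail (ih hn) ?_
    have hs := headFn_spec hX hall ⟨n, hn1⟩
    exact ⟨hall _, hall _, rfl, rfl, ⟨wh (headFn X ⟨n, hn1⟩), hs.1, hs.2.1⟩⟩

theorem label_on_spokes_G (hall : ∀ v : V, ((none : VT V), ι v) ∈ X.E)
    {u x : V} (hadj : G.Adj u x) :
    ∃ j, IsLabeled X.E ((none : VT V), ι u) j ∧ IsLabeled X.E ((none : VT V), ι x) j := by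
  rcases G_or hX hadj with h | h
  · have ht := isLabeled_triangle (E := X.E) (i := (none : VT V)) (u := ι u) (j := ι x)
      (none_ne_ι u) (by simp [hadj.ne]) (none_ne_ι x) (hall u) h (hall x)
    exact ⟨ι x, ht.1, ht.2.2⟩
  · have ht := isLabeled_triangle (E := X.E) (i := (none : VT V)) (u := ι x) (j := ι u)
      (none_ne_ι x) (by simp [hadj.ne']) (none_ne_ι u) (hall x) h (hall u)
    exact ⟨ι u, ht.2.2, ht.1⟩

theorem spokes_same_bag (hall : ∀ v : V, ((none : VT V), ι v) ∈ X.E)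
    {u v : V} (hr : G.Reachable u v) :
    inSameBag X.E ((none : VT V), ι u) ((none : VT V), ι v) := by
  obtain ⟨w⟩ := hr
  induction w with
  | nil => exact Relation.ReflTransGen.refl
  | @cons a b c hadj w ih =>
    obtain ⟨j, hj1, hj2⟩ := label_on_spokes_G hX hall hadj
    have step : (fun x y => x ∈ X.E ∧ y ∈ X.E ∧ x.1 = ((none : VT V), ι a).1 ∧
        y.1 = ((none : VT V), ι a).1 ∧ (labelSet X.E x ∩ labelSet X.E y).Nonempty)
        ((none : VT V), ι a) ((none : VT V), ι b) :=
      ⟨hall _, hall _, rfl, rfl, ⟨j, hj1, hj2⟩⟩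
    exact Relation.ReflTransGen.head step ih

theorem lower_bound (hconn : G.Connected) :
    minVertexCover G + 1 ≤ widthX X := by
  classical
  have hwidth : widthX X = 1 + X.E.sup fun e => (bagLabels X.E e).ncard := rfl
  have hτn : minVertexCover G ≤ Fintype.card V := by
    refine le_trans (Nat.sInf_le ⟨Finset.univ, fun u v _ => Or.inl (Finset.mem_univ u), rfl⟩) ?_
    simp
  by_cases hall : ∀ k, ((none : VT V), wh k) ∈ X.E
  · -- Case A : all spokes point out of the hub; the wheel bag is big
    have hsub : (fun k => wh (V := V) k) '' ↑(Finset.univ.image (headFn X)) ⊆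
        bagLabels X.E ((none : VT V), wh 0) := by
      rintro j ⟨k, hk, rfl⟩
      obtain ⟨j₀, _, rfl⟩ := Finset.mem_image.mp hk
      refine ⟨((none : VT V), wh (headFn X j₀)), ?_, (headFn_spec hX hall j₀).2.2⟩
      have := wheel_same_bag hX hall (headFn X j₀) (headFn X j₀).isLt
      simpa using this
    have hcard : Fintype.card V + 1 ≤ (bagLabels X.E ((none : VT V), wh 0)).ncard := by
      refine le_trans (headFn_card X) ?_
      calc (Finset.univ.image (headFn X)).card
          = ((fun k => wh (V := V) k) '' ↑(Finset.univ.image (headFn X))).ncard := by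
            rw [Set.ncard_image_of_injective _ wh_injective, Set.ncard_coe_finset]
        _ ≤ _ := Set.ncard_le_ncard hsub (Set.toFinite _)
    have hsup : (bagLabels X.E ((none : VT V), wh 0)).ncard ≤
        X.E.sup fun e => (bagLabels X.E e).ncard :=
      Finset.le_sup (f := fun e => (bagLabels X.E e).ncard) (hall 0)
    omega
  · -- Case B : some spoke points into the hub; the root is a wheel vertex
    push_neg at hall
    obtain ⟨k₀, hk₀⟩ := hall
    have hrev : (wh k₀, (none : VT V)) ∈ X.E := (spoke_or hX k₀).resolve_left hk₀
    have hnopath := X.acyclic _ _ hrev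
    obtain ⟨p, hp⟩ := X.reach (wh k₀)
    have hroot : ∃ t, X.root = wh t := by
      by_contra hnr
      push_neg at hnr
      exact hnopath (exists_none_path_to_inr hX hp hnr)
    have hallv : ∀ v : V, ((none : VT V), ι v) ∈ X.E := by
      intro v
      by_contra hv
      have hrev2 : (ι v, (none : VT V)) ∈ X.E := (rv_or hX v).resolve_left hv
      have hnp2 := X.acyclic _ _ hrev2
      obtain ⟨q, hq⟩ := X.reach (ι v)
      obtain ⟨t, ht⟩ := hroot
      refine hnp2 (exists_none_path_to_inl hX hq ?_)
      intro u
      rw [ht]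
      exact wh_ne_ι u t
    set H := Finset.univ.filter (fun v : V => ∃ u, G.Adj u v ∧ (ι u, ι v) ∈ X.E) with hH
    have hcov : IsVertexCover G H := by
      intro u v hadj
      rcases G_or hX hadj with h | h
      · refine Or.inr ?_
        rw [hH, Finset.mem_filter]
        exact ⟨Finset.mem_univ v, u, hadj, h⟩
      · refine Or.inl ?_
        rw [hH, Finset.mem_filter]
        exact ⟨Finset.mem_univ u, v, hadj.symm, h⟩
    have hτ : minVertexCover G ≤ H.card := Nat.sInf_le ⟨H, hcov, rfl⟩
    obtain ⟨v₀⟩ : Nonempty V := hconn.nonempty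
    have hsub : ι '' ↑H ⊆ bagLabels X.E ((none : VT V), ι v₀) := by
      rintro j ⟨v, hv, rfl⟩
      rw [Finset.mem_coe, hH, Finset.mem_filter] at hv
      obtain ⟨-, u, hadj, huv⟩ := hv
      refine ⟨((none : VT V), ι v),
        spokes_same_bag hX hallv (hconn.preconnected v₀ v), ?_⟩
      exact (isLabeled_triangle (none_ne_ι u) (by simp [hadj.ne]) (none_ne_ι v)
        (hallv u) huv (hallv v)).2.2
    have hcard : H.card ≤ (bagLabels X.E ((none : VT V), ι v₀)).ncard := by
      calc H.card = (ι '' ↑H).ncard := by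
            rw [Set.ncard_image_of_injective _ ι_injective, Set.ncard_coe_finset]
        _ ≤ _ := Set.ncard_le_ncard hsub (Set.toFinite _)
    have hsup : (bagLabels X.E ((none : VT V), ι v₀)).ncard ≤
        X.E.sup fun e => (bagLabels X.E e).ncard :=
      Finset.le_sup (f := fun e => (bagLabels X.E e).ncard) (hallv v₀)
    omega

end Stmt7
namespace Stmt7

variable {V : Type*} [Fintype V] [LinearOrder V] (G : SimpleGraph V) [DecidableRel G.Adj]

set_option linter.unusedSectionVars false

variable (S : Finset V)

/-- the edge set of the constructed optimal extraction order -/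
def EXC : Finset (VT V × VT V) :=
  ((Finset.univ.filter (fun p : V × V => G.Adj p.1 p.2 ∧ p.2 ∈ S ∧ (p.1 ∈ S → p.1 < p.2))).image
      (fun p => (ι p.1, ι p.2)))
  ∪ (Finset.univ.image fun v : V => ((none : VT V), ι v))
  ∪ (Finset.univ.image fun k : Fin (2 * Fintype.card V + 2) => (wh k, (none : VT V)))
  ∪ ((Finset.univ.filter (fun p : Fin (2 * Fintype.card V + 2) × Fin (2 * Fintype.card V + 2) =>
        (p.2 : ℕ) = (p.1 : ℕ) + 1)).image (fun p => (wh p.1, wh p.2)))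

theorem mem_EXC {x y : VT V} :
    (x, y) ∈ EXC G S ↔
      (∃ u v, G.Adj u v ∧ v ∈ S ∧ (u ∈ S → u < v) ∧ x = ι u ∧ y = ι v) ∨
      (∃ v : V, x = none ∧ y = ι v) ∨
      (∃ k, x = wh (V := V) k ∧ y = none) ∨
      (∃ j k : Fin (2 * Fintype.card V + 2), (k : ℕ) = (j : ℕ) + 1 ∧ x = wh j ∧ y = wh k) := by
  simp only [EXC, Finset.mem_union, Finset.mem_image, Finset.mem_filter,
    Finset.mem_univ, true_and, Prod.ext_iff, ι, wh, Prod.exists]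
  aesop

theorem EXC_rv (v : V) : ((none : VT V), ι v) ∈ EXC G S := by
  rw [mem_EXC]; exact Or.inr (Or.inl ⟨v, rfl, rfl⟩)

theorem EXC_spoke (k : Fin (2 * Fintype.card V + 2)) : (wh k, (none : VT V)) ∈ EXC G S := by
  rw [mem_EXC]; exact Or.inr (Or.inr (Or.inl ⟨k, rfl, rfl⟩))

theorem EXC_wheel {j k : Fin (2 * Fintype.card V + 2)} (h : (k : ℕ) = (j : ℕ) + 1) :
    (wh (V := V) j, wh k) ∈ EXC G S := by
  rw [mem_EXC]; exact Or.inr (Or.inr (Or.inr ⟨j, k, h, rfl, rfl⟩))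

theorem EXC_G {u v : V} (hadj : G.Adj u v) (hv : v ∈ S) (huv : u ∈ S → u < v) :
    (ι u, ι v) ∈ EXC G S := by
  rw [mem_EXC]; exact Or.inl ⟨u, v, hadj, hv, huv, rfl, rfl⟩

theorem EXC_orientation (hcov : IsVertexCover G S) :
    IsOrientationOf (EXC G S) (reductionGraph G) := by
  constructor
  · intro x y h
    rw [mem_EXC] at h
    rcases h with ⟨u, v, hadj, _, _, rfl, rfl⟩ | ⟨v, rfl, rfl⟩ | ⟨k, rfl, rfl⟩ |
        ⟨j, k, hjk, rfl, rfl⟩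
    · rcases lt_or_gt_of_ne hadj.ne with hlt | hlt
      · exact Or.inl (red_G hlt hadj)
      · exact Or.inr (red_G hlt hadj.symm)
    · exact Or.inl (red_rv v)
    · exact Or.inr (red_spoke k)
    · exact Or.inl (red_wheel hjk)
  · intro x y h
    rw [mem_reductionGraph] at h
    rcases h with ⟨u, v, hlt, hadj, rfl, rfl⟩ | ⟨v, rfl, rfl⟩ | ⟨k, rfl, rfl⟩ |
        ⟨j, k, hjk, rfl, rfl⟩
    · by_cases hv : v ∈ S
      · exact Or.inl (EXC_G G S hadj hv (fun _ => hlt))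
      · have hu : u ∈ S := (hcov u v hadj).resolve_right hv
        exact Or.inr (EXC_G G S hadj.symm hu (fun hv' => absurd hv' hv))
    · exact Or.inl (EXC_rv G S v)
    · exact Or.inr (EXC_spoke G S k)
    · exact Or.inl (EXC_wheel G S hjk)

/-- index of a vertex in the linear order -/
def idx (v : V) : ℕ := (Finset.univ.filter (· < v)).card

theorem idx_lt {u v : V} (h : u < v) : idx u < idx v := by
  apply Finset.card_lt_card
  constructor
  · intro x hx
    simp only [Finset.mem_filter, Finset.mem_univ, true_and] at hx ⊢
    exact lt_trans hx h
  · intro hsub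
    have := hsub (by simp [h] : u ∈ Finset.univ.filter (· < v))
    simp at this

/-- a rank function certifying acyclicity -/
def rnk : VT V → ℕ
  | none => 2 * Fintype.card V + 2
  | some (Sum.inr k) => (k : ℕ)
  | some (Sum.inl v) => if v ∈ S then 2 * Fintype.card V + 4 + idx v else 2 * Fintype.card V + 3

theorem EXC_rank : ∀ x y : VT V, (x, y) ∈ EXC G S → rnk S x < rnk S y := by
  intro x y h
  rw [mem_EXC] at h
  rcases h with ⟨u, v, hadj, hv, huv, rfl, rfl⟩ | ⟨v, rfl, rfl⟩ | ⟨k, rfl, rfl⟩ |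
      ⟨j, k, hjk, rfl, rfl⟩
  · simp only [rnk, ι, if_pos hv]
    by_cases hu : u ∈ S
    · rw [if_pos hu]
      have := idx_lt (huv hu)
      omega
    · rw [if_neg hu]
      omega
  · simp only [rnk, ι]
    by_cases hv : v ∈ S <;> simp [hv] <;> omega
  · simp only [rnk, wh]
    have := k.isLt
    omega
  · simp only [rnk, wh]
    omega

/-- the wheel path as a list -/
def wlist (k : ℕ) : List (VT V) :=
  (List.range (k + 1)).map
    (fun i => if h : i < 2 * Fintype.card V + 2 then wh ⟨i, h⟩ else none)

theorem wlist_isPath {k : ℕ} (hk : k < 2 * Fintype.card V + 2) :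
    IsPath (EXC G S) (wh (0 : Fin (2 * Fintype.card V + 2))) (wh ⟨k, hk⟩) (wlist k) := by
  have hlen : (wlist (V := V) k).length = k + 1 := by simp [wlist]
  have hget : ∀ i (h : i < (wlist (V := V) k).length) (h2 : i < 2 * Fintype.card V + 2),
      (wlist (V := V) k)[i]'h = wh ⟨i, h2⟩ := by
    intro i h h2
    simp only [wlist, List.getElem_map, List.getElem_range]
    rw [dif_pos h2]
  have hne : wlist (V := V) k ≠ [] := by
    intro hc
    have := congrArg List.length hc
    rw [hlen] at this
    simp at this
  refine ⟨hne, ?_, ?_, ?_, ?_⟩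
  · rw [List.head?_eq_head hne, Option.some_inj, List.head_eq_getElem]
    rw [hget 0 (by omega) (by omega)]
    rfl
  · rw [List.getLast?_eq_getLast hne, Option.some_inj, List.getLast_eq_getElem]
    simp only [hlen, Nat.add_sub_cancel]
    rw [hget k (by omega) hk]
  · rw [wlist]
    refine List.Nodup.map_on ?_ List.nodup_range
    intro i hi j hj hf
    simp only [List.mem_range] at hi hj
    have hi2 : i < 2 * Fintype.card V + 2 := by omega
    have hj2 : j < 2 * Fintype.card V + 2 := by omega
    rw [dif_pos hi2, dif_pos hj2] at hf
    have := wh_injective hf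
    simpa using this
  · intro e he
    obtain ⟨i, hilt, h1, h2⟩ := mem_pathEdges_iff.mp he
    rw [hlen] at hilt
    rw [hget i (by omega) (by omega)] at h1
    rw [hget (i+1) (by omega) (by omega)] at h2
    obtain ⟨a, b⟩ := e
    simp only at h1 h2
    rw [← h1, ← h2]
    exact EXC_wheel G S rfl

/-- the constructed extraction order -/
noncomputable def XC : ExtractionOrder (VT V) where
  E := EXC G S
  root := wh 0
  reach := by
    intro x
    rcases vt_cases x with rfl | ⟨v, rfl⟩ | ⟨k, rfl⟩
    · exact ⟨[wh 0, none], isPath_pair (wh_ne_none _) (EXC_spoke G S 0)⟩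
    · exact ⟨[wh 0, none, ι v],
        isPath_triple (wh_ne_none _) (none_ne_ι _) (by simp [wh, ι])
          (EXC_spoke G S 0) (EXC_rv G S v)⟩
    · exact ⟨wlist (k : ℕ), wlist_isPath G S k.isLt⟩
  acyclic := acyclic_of_rank (EXC_rank G S)

theorem XC_E : (XC G S).E = EXC G S := rfl

end Stmt7
section BagTail

variable {W : Type*}

theorem inSameBag_tail {E : Finset (W × W)} {e e' : W × W} (h : inSameBag E e e') :
    e' = e ∨ e'.1 = e.1 := by
  induction h with
  | refl => exact Or.inl rfl
  | tail _ hstep _ => exact Or.inr hstep.2.2.2.1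

end BagTail

namespace Stmt7

variable {V : Type*} [Fintype V] [LinearOrder V] (G : SimpleGraph V) [DecidableRel G.Adj]

set_option linter.unusedSectionVars false

variable (S : Finset V)

theorem EXC_tail_to_inr {x : VT V} {k : Fin (2 * Fintype.card V + 2)}
    (h : (x, wh k) ∈ EXC G S) : ∃ j : Fin (2 * Fintype.card V + 2),
      x = wh j ∧ (k : ℕ) = (j : ℕ) + 1 := by
  rw [mem_EXC] at h
  rcases h with ⟨u, v, _, _, _, _, hy⟩ | ⟨v, _, hy⟩ | ⟨k', _, hy⟩ | ⟨j, k', hjk, hx, hy⟩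
  · exact absurd hy.symm (ι_ne_wh _ _)
  · exact absurd hy.symm (ι_ne_wh _ _)
  · exact absurd hy (wh_ne_none _)
  · rw [wh_inj_iff] at hy
    subst hy
    exact ⟨j, hx, hjk⟩

theorem EXC_tail_to_none {x : VT V} (h : (x, (none : VT V)) ∈ EXC G S) :
    ∃ k, x = wh k := by
  rw [mem_EXC] at h
  rcases h with ⟨u, v, _, _, _, _, hy⟩ | ⟨v, _, hy⟩ | ⟨k', hx, _⟩ | ⟨j, k', _, _, hy⟩
  · exact absurd hy (none_ne_ι _)
  · exact absurd hy (none_ne_ι _)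
  · exact ⟨k', hx⟩
  · exact absurd hy (none_ne_wh _)

theorem EXC_tail_to_inl {x : VT V} {v : V} (h : (x, ι v) ∈ EXC G S) :
    x = none ∨ ∃ u : V, x = ι u ∧ v ∈ S := by
  rw [mem_EXC] at h
  rcases h with ⟨u, v', _, hv', _, hx, hy⟩ | ⟨v', hx, _⟩ | ⟨k', _, hy⟩ | ⟨j, k', _, _, hy⟩
  · rw [ι_inj_iff] at hy
    subst hy
    exact Or.inr ⟨u, hx, hv'⟩
  · exact Or.inl hx
  · exact absurd hy (ι_ne_none _)
  · exact absurd hy (ι_ne_wh _ _)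

/-- on any path ending at the hub, all edge tails are wheel vertices -/
theorem path_to_none_tails {a : VT V} {p : List (VT V)}
    (hp : IsPath (EXC G S) a (none : VT V) p) :
    ∀ i, ∀ h : i + 1 < p.length, ∃ k, p[i]'(Nat.lt_of_succ_lt h) = wh k := by
  have key : ∀ d i, i + d + 2 = p.length → ∃ k, p[i]? = some (wh k) := by
    intro d
    induction d with
    | zero =>
      intro i hi
      have hedge := hp.edge (i := i) (by omega)
      have hlast : p[i+1]'(by omega) = none := by
        have h' := hp.getElem_last
        simpa only [show p.length - 1 = i + 1 from by omega] using h'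
      rw [hlast] at hedge
      obtain ⟨k, hk⟩ := EXC_tail_to_none G S hedge
      exact ⟨k, by rw [List.getElem?_eq_getElem (by omega)]; exact congrArg some hk⟩
    | succ d ih =>
      intro i hi
      obtain ⟨k, hk⟩ := ih (i+1) (by omega)
      rw [List.getElem?_eq_getElem (by omega)] at hk
      have hk' : p[i+1]'(by omega) = wh k := Option.some_injective _ hk
      have hedge := hp.edge (i := i) (by omega)
      rw [hk'] at hedge
      obtain ⟨j, hj, _⟩ := EXC_tail_to_inr G S hedge
      exact ⟨j, by rw [List.getElem?_eq_getElem (by omega)]; exact congrArg some hj⟩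
  intro i h
  obtain ⟨k, hk⟩ := key (p.length - i - 2) i (by omega)
  rw [List.getElem?_eq_getElem (by omega)] at hk
  exact ⟨k, Option.some_injective _ hk⟩

/-- if some vertex of a path is a wheel vertex, so is the start -/
theorem start_wheel_of_mem {a b : VT V} {p : List (VT V)} (hp : IsPath (EXC G S) a b p) :
    ∀ i, ∀ h : i < p.length, ∀ t, p[i]'h = wh t → ∃ t', a = wh t' := by
  intro i
  induction i with
  | zero =>
    intro h t ht
    exact ⟨t, by rw [← hp.getElem_zero]; exact ht⟩
  | succ n ih =>
    intro h t ht
    have hedge := hp.edge (i := n) (by omega)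
    rw [ht] at hedge
    obtain ⟨j, hj, _⟩ := EXC_tail_to_inr G S hedge
    exact ih (by omega) j hj

theorem label_not_wheel {e : VT V × VT V} {t : Fin (2 * Fintype.card V + 2)} :
    ¬ IsLabeled (EXC G S) e (wh t) := by
  rintro ⟨i, p₁, p₂, hc, -⟩
  obtain ⟨x₁, x₂, hne, h1, h2⟩ := hc.two_inedges
  obtain ⟨j₁, hj₁, hk₁⟩ := EXC_tail_to_inr G S h1
  obtain ⟨j₂, hj₂, hk₂⟩ := EXC_tail_to_inr G S h2
  apply hne
  rw [hj₁, hj₂, wh_inj_iff]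
  exact Fin.ext (by omega)

theorem label_none_tail {e : VT V × VT V} (h : IsLabeled (EXC G S) e (none : VT V)) :
    ∃ k, e.1 = wh k := by
  obtain ⟨i, p₁, p₂, hc, he⟩ := h
  rcases he with he | he
  · obtain ⟨idx, hlt, h1, -⟩ := mem_pathEdges_iff.mp he
    obtain ⟨k, hk⟩ := path_to_none_tails G S hc.2.2.1 idx hlt
    exact ⟨k, by rw [← h1]; exact hk⟩
  · obtain ⟨idx, hlt, h1, -⟩ := mem_pathEdges_iff.mp he
    obtain ⟨k, hk⟩ := path_to_none_tails G S hc.2.2.2.1 idx hlt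
    exact ⟨k, by rw [← h1]; exact hk⟩

theorem label_inl_spec {e : VT V × VT V} {s : V} (h : IsLabeled (EXC G S) e (ι s)) :
    (e.1 = none ∨ ∃ u : V, e.1 = ι u) ∧ s ∈ S := by
  obtain ⟨i, p₁, p₂, hc, he⟩ := h
  obtain ⟨x₁, x₂, hne, h1, h2⟩ := hc.two_inedges
  have hsS : s ∈ S := by
    rcases EXC_tail_to_inl G S h1 with hx1 | ⟨u, hu, hus⟩
    · rcases EXC_tail_to_inl G S h2 with hx2 | ⟨u, hu, hus⟩
      · exact absurd (hx1.trans hx2.symm) hne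
      · exact hus
    · exact hus
  refine ⟨?_, hsS⟩
  have hiw : ∀ t, i ≠ wh t := by
    intro t hit
    have hcross : ∀ q, IsPath (EXC G S) i (ι s) q → (none : VT V) ∈ q := by
      intro q hq
      obtain ⟨e', he', hne1, hne2⟩ := exists_crossing (fun x => ∃ u : V, x = ι u) hq
        (by rw [hit]; rintro ⟨u, hu⟩; exact (wh_ne_ι u t) hu) ⟨s, rfl⟩
      obtain ⟨u, hu⟩ := hne2
      have heE : e' ∈ EXC G S := hq.2.2.2.2 _ he'
      have h1n : e'.1 = none := by
        have : (e'.1, ι u) ∈ EXC G S := by rw [← hu]; exact heE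
        rcases EXC_tail_to_inl G S this with h' | ⟨u', hu', -⟩
        · exact h'
        · exact absurd ⟨u', hu'⟩ hne1
      exact h1n ▸ (hq.mem_of_edge he').1
    have hn1 := hcross _ hc.2.2.1
    have hn2 := hcross _ hc.2.2.2.1
    rcases hc.2.2.2.2 _ hn1 hn2 with h' | h'
    · rw [hit] at h'
      exact (none_ne_wh t) h'
    · exact (none_ne_ι s) h'
  rcases vt_cases e.1 with h1' | ⟨u, h1'⟩ | ⟨t, h1'⟩
  · exact Or.inl h1'
  · exact Or.inr ⟨u, h1'⟩
  · exfalso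
    rcases he with he | he
    · obtain ⟨idx, hlt, hg, -⟩ := mem_pathEdges_iff.mp he
      obtain ⟨t', ht'⟩ := start_wheel_of_mem G S hc.2.2.1 idx (by omega) t
        (by rw [hg]; exact h1')
      exact hiw t' ht'
    · obtain ⟨idx, hlt, hg, -⟩ := mem_pathEdges_iff.mp he
      obtain ⟨t', ht'⟩ := start_wheel_of_mem G S hc.2.2.2.1 idx (by omega) t
        (by rw [hg]; exact h1')
      exact hiw t' ht'

theorem XC_width (h2 : 2 ≤ S.card) : widthX (XC G S) ≤ S.card + 1 := by
  have hbag : ∀ e ∈ EXC G S, (bagLabels (EXC G S) e).ncard ≤ S.card := by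
    intro e _
    rcases vt_cases e.1 with h1 | ⟨u, h1⟩ | ⟨k, h1⟩
    · -- tail = none : labels lie in ι '' S
      have hsub : bagLabels (EXC G S) e ⊆ ι '' ↑S := by
        rintro j ⟨e', hbag', hlab⟩
        have htail : e'.1 = e.1 := by
          rcases inSameBag_tail hbag' with rfl | h'
          · rfl
          · exact h'
        rcases vt_cases j with rfl | ⟨s, rfl⟩ | ⟨t, rfl⟩
        · obtain ⟨k', hk'⟩ := label_none_tail G S hlab
          rw [htail, h1] at hk'
          exact absurd hk' (none_ne_wh _)
        · obtain ⟨-, hs⟩ := label_inl_spec G S hlab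
          exact ⟨s, hs, rfl⟩
        · exact absurd hlab (label_not_wheel G S)
      calc (bagLabels (EXC G S) e).ncard ≤ (ι '' ↑S).ncard :=
            Set.ncard_le_ncard hsub (Set.toFinite _)
        _ = S.card := by rw [Set.ncard_image_of_injective _ ι_injective, Set.ncard_coe_finset]
    · -- tail = ι u : labels lie in ι '' S
      have hsub : bagLabels (EXC G S) e ⊆ ι '' ↑S := by
        rintro j ⟨e', hbag', hlab⟩
        have htail : e'.1 = e.1 := by
          rcases inSameBag_tail hbag' with rfl | h'
          · rfl
          · exact h'
        rcases vt_cases j with rfl | ⟨s, rfl⟩ | ⟨t, rfl⟩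
        · obtain ⟨k', hk'⟩ := label_none_tail G S hlab
          rw [htail, h1] at hk'
          exact absurd hk' (ι_ne_wh _ _)
        · obtain ⟨-, hs⟩ := label_inl_spec G S hlab
          exact ⟨s, hs, rfl⟩
        · exact absurd hlab (label_not_wheel G S)
      calc (bagLabels (EXC G S) e).ncard ≤ (ι '' ↑S).ncard :=
            Set.ncard_le_ncard hsub (Set.toFinite _)
        _ = S.card := by rw [Set.ncard_image_of_injective _ ι_injective, Set.ncard_coe_finset]
    · -- tail = wh k : labels lie in {none}
      have hsub : bagLabels (EXC G S) e ⊆ {(none : VT V)} := by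
        rintro j ⟨e', hbag', hlab⟩
        have htail : e'.1 = e.1 := by
          rcases inSameBag_tail hbag' with rfl | h'
          · rfl
          · exact h'
        rcases vt_cases j with rfl | ⟨s, rfl⟩ | ⟨t, rfl⟩
        · rfl
        · obtain ⟨hor, -⟩ := label_inl_spec G S hlab
          rw [htail, h1] at hor
          rcases hor with h' | ⟨u', h'⟩
          · exact absurd h' (wh_ne_none _)
          · exact absurd h' (wh_ne_ι _ _)
        · exact absurd hlab (label_not_wheel G S)
      calc (bagLabels (EXC G S) e).ncard ≤ ({(none : VT V)} : Set (VT V)).ncard :=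
            Set.ncard_le_ncard hsub (Set.toFinite _)
        _ = 1 := Set.ncard_singleton _
        _ ≤ S.card := by omega
  have hsup : (EXC G S).sup (fun e => (bagLabels (EXC G S) e).ncard) ≤ S.card :=
    Finset.sup_le hbag
  show 1 + (EXC G S).sup (fun e => (bagLabels (EXC G S) e).ncard) ≤ S.card + 1
  omega

end Stmt7

/-- correctness of the NP-hardness reduction from vertex cover: for every
connected graph `G` with minimum vertex cover of size at least 2, the extraction width of
the polynomial-size reduction graph equals the minimum vertex cover size plus one, so any
algorithm computing extraction orders of minimum width solves vertex cover. -/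
theorem stmt7 {V : Type*} [Fintype V] [LinearOrder V] (G : SimpleGraph V)
    [DecidableRel G.Adj] (hconn : G.Connected) (h2 : 2 ≤ minVertexCover G) :
    extractionWidth (reductionGraph G) = minVertexCover G + 1 := by
  classical
  open Stmt7 in
  have hne : {k | ∃ S : Finset V, IsVertexCover G S ∧ S.card = k}.Nonempty :=
    ⟨(Finset.univ : Finset V).card,
      Finset.univ, fun u v _ => Or.inl (Finset.mem_univ u), rfl⟩
  obtain ⟨S, hcov, hcard'⟩ := Nat.sInf_mem hne
  have hcard : minVertexCover G = S.card := hcard'.symm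
  have h2' : 2 ≤ S.card := by rw [← hcard]; exact h2
  have hor : IsOrientationOf (XC G S).E (reductionGraph G) := EXC_orientation G S hcov
  have hub : widthX (XC G S) ≤ minVertexCover G + 1 := by
    rw [hcard]
    exact XC_width G S h2'
  have hlb := lower_bound hor hconn
  have hXw : widthX (XC G S) = minVertexCover G + 1 := le_antisymm hub hlb
  rw [extractionWidth]
  apply le_antisymm
  · exact Nat.sInf_le ⟨XC G S, hor, hXw⟩
  · refine le_csInf ⟨_, XC G S, hor, hXw⟩ ?_
    rintro w ⟨Y, hY, rfl⟩
    exact lower_bound hY hconn
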